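/- Let A ⊆ ℝ^d be finite, θ̂, θ* ∈ ℝ^d, Σ positive definite, β > 0 with ‖θ̂ − θ*‖_Σ ≤ β. Let C = {x ∈ A : ∀y ∈ A, ⟨x − y, θ̂⟩ + β‖x − y‖_{Σ⁻¹} ≥ 0}. Then x* = argmax_{x∈A} ⟨x, θ*⟩ belongs to C. -/

import Mathlib

open Matrix

open scoped MatrixOrder Matrix.Norms.L2Operator in
lemma cs_aux {d : ℕ} {Sig : Matrix (Fin d) (Fin d) ℝ} (hSig : Sig.PosDef)
    (v u : Fin d → ℝ) :
    v ⬝ᵥ u ≤ Real.sqrt (v ⬝ᵥ Sig⁻¹.mulVec v) * Real.sqrt (u ⬝ᵥ Sig.mulVec u) := by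
  have hInv : (Sig⁻¹).PosDef := hSig.inv
  set T := CFC.sqrt Sig⁻¹ with hT
  have hT2 : T * T = Sig⁻¹ := CFC.sqrt_mul_sqrt_self Sig⁻¹ hInv.posSemidef.nonneg
  have hTh : Tᵀ = T := by
    have : Tᵀ = T := by
      simpa [Matrix.conjTranspose_eq_transpose_of_trivial] using (CFC.sqrt_nonneg Sig⁻¹).posSemidef.isHermitian.eq
    simpa [Matrix.IsHermitian, Matrix.conjTranspose] using this
  have hmul : Sig⁻¹ * Sig = 1 := Matrix.nonsing_inv_mul _ hSig.det_pos.ne'.isUnit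
  set a := T *ᵥ v with ha
  set b := T *ᵥ (Sig *ᵥ u) with hb
  have hab : a ⬝ᵥ b = v ⬝ᵥ u := by
    rw [ha, hb, dotProduct_mulVec, vecMul_mulVec, hTh, hT2, ← dotProduct_mulVec,
      mulVec_mulVec, hmul, one_mulVec]
  have haa : a ⬝ᵥ a = v ⬝ᵥ Sig⁻¹ *ᵥ v := by
    rw [ha, dotProduct_mulVec, vecMul_mulVec, hTh, hT2, ← dotProduct_mulVec]
  have hbb : b ⬝ᵥ b = u ⬝ᵥ Sig *ᵥ u := by
    rw [hb, dotProduct_mulVec, vecMul_mulVec, hTh, hT2, ← dotProduct_mulVec,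
      mulVec_mulVec, hmul, one_mulVec, dotProduct_comm]
  calc v ⬝ᵥ u = ∑ i, a i * b i := hab.symm
    _ ≤ Real.sqrt (∑ i, a i ^ 2) * Real.sqrt (∑ i, b i ^ 2) :=
        Real.sum_mul_le_sqrt_mul_sqrt _ _ _
    _ = Real.sqrt (v ⬝ᵥ Sig⁻¹.mulVec v) * Real.sqrt (u ⬝ᵥ Sig.mulVec u) := by
        rw [← haa, ← hbb]; simp [dotProduct, sq]

theorem stmt_14 {d : ℕ} (A : Finset (Fin d → ℝ))
    (Sig : Matrix (Fin d) (Fin d) ℝ) (hSig : Sig.PosDef)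
    (β : ℝ) (hβ : 0 < β) (θhat θstar xstar : Fin d → ℝ)
    (hconc : Real.sqrt ((θhat - θstar) ⬝ᵥ Sig.mulVec (θhat - θstar)) ≤ β)
    (hxstar : xstar ∈ A) (hopt : ∀ x ∈ A, x ⬝ᵥ θstar ≤ xstar ⬝ᵥ θstar) :
    xstar ∈ {x ∈ A | ∀ y ∈ A,
      0 ≤ (x - y) ⬝ᵥ θhat + β * Real.sqrt ((x - y) ⬝ᵥ Sig⁻¹.mulVec (x - y))} := by
  simp only [Finset.mem_filter]
  refine ⟨hxstar, fun y hy => ?_⟩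
  set v := xstar - y with hv
  have h1 : 0 ≤ v ⬝ᵥ θstar := by
    rw [hv, sub_dotProduct]; linarith [hopt y hy]
  have h2 : v ⬝ᵥ (θstar - θhat) ≤
      Real.sqrt (v ⬝ᵥ Sig⁻¹.mulVec v) * Real.sqrt ((θstar - θhat) ⬝ᵥ Sig.mulVec (θstar - θhat)) :=
    cs_aux hSig v _
  have hneg : (θstar - θhat) ⬝ᵥ Sig.mulVec (θstar - θhat)
      = (θhat - θstar) ⬝ᵥ Sig.mulVec (θhat - θstar) := by
    have : θstar - θhat = -(θhat - θstar) := by abel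
    rw [this, neg_dotProduct, mulVec_neg, dotProduct_neg, neg_neg]
  rw [hneg] at h2
  have hs0 : 0 ≤ Real.sqrt (v ⬝ᵥ Sig⁻¹.mulVec v) := Real.sqrt_nonneg _
  have h3 : Real.sqrt (v ⬝ᵥ Sig⁻¹.mulVec v) *
      Real.sqrt ((θhat - θstar) ⬝ᵥ Sig.mulVec (θhat - θstar)) ≤
      Real.sqrt (v ⬝ᵥ Sig⁻¹.mulVec v) * β :=
    mul_le_mul_of_nonneg_left hconc hs0
  have h4 : v ⬝ᵥ θhat = v ⬝ᵥ θstar - v ⬝ᵥ (θstar - θhat) := by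
    rw [dotProduct_sub]; ring
  nlinarith [h2, h3, h1]
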